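/- Part (ii) of Proposition 3: under the hypotheses of the previous construction—D > 0, a partition of {1,…,n} into importers I and exporters E, S̄_i ≥ 0, and a solution (X*, S*, T, ν) with S*_i ≥ 0, T_i ≥ 0, satisfying D(S̄_i − S*_i) = X* ν_i for all i, 0 ≤ D(S̄_i − S*_i) ≤ X* (V_i S*_i/(K_i + S*_i)) T_i for i ∈ I (with V_i > 0, K_i > 0), and ν_i ≤ 0 for i ∈ E—for every X with 0 ≤ X ≤ X* there exists a vector S ∈ ℝ^n with S_i ≥ 0 for all i such that D(S̄_i − S_i) = X ν_i for all i and 0 ≤ D(S̄_i − S_i) ≤ X (V_i S_i/(K_i + S_i)) T_i for all i ∈ I. -/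

import Mathlib

/-- Part (ii) of Proposition 3: if the chemostat coupling constraints are
feasible at population X*, then for every 0 ≤ X ≤ X* there exist nonnegative
medium concentrations S satisfying them at population X (with the same
transporter concentrations T and exchange fluxes ν). -/
theorem chemostat_rba_feasible_below_max
    (D : ℝ) (hD : 0 < D) (n : ℕ) (hn : 1 ≤ n)
    (I E : Set (Fin n)) (hunion : I ∪ E = Set.univ) (hdisj : I ∩ E = ∅)
    (Sbar Sstar T ν V K : Fin n → ℝ) (Xstar : ℝ) (hXstar : 0 ≤ Xstar)
    (hSbar : ∀ i, 0 ≤ Sbar i) (hSstar : ∀ i, 0 ≤ Sstar i)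
    (hT : ∀ i, 0 ≤ T i)
    (hV : ∀ i ∈ I, 0 < V i) (hK : ∀ i ∈ I, 0 < K i)
    (heq : ∀ i, D * (Sbar i - Sstar i) = Xstar * ν i)
    (himp : ∀ i ∈ I, 0 ≤ D * (Sbar i - Sstar i) ∧
      D * (Sbar i - Sstar i) ≤ Xstar * (V i * Sstar i / (K i + Sstar i)) * T i)
    (hexp : ∀ i ∈ E, ν i ≤ 0)
    (X : ℝ) (hX0 : 0 ≤ X) (hXle : X ≤ Xstar) :
    ∃ S : Fin n → ℝ, (∀ i, 0 ≤ S i) ∧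
      (∀ i, D * (Sbar i - S i) = X * ν i) ∧
      (∀ i ∈ I, 0 ≤ D * (Sbar i - S i) ∧
        D * (Sbar i - S i) ≤ X * (V i * S i / (K i + S i)) * T i) := by
  refine ⟨fun i => Sbar i - X * ν i / D, ?_, ?_, ?_⟩
  · intro i
    rcases (Set.eq_univ_iff_forall.mp hunion i) with hi | hi
    · -- importer: ν i ≥ 0, and S i ≥ Sstar i
      have h1 := (himp i hi).1
      have hnu : 0 ≤ Xstar * ν i := (heq i) ▸ h1
      have hS : Sstar i = Sbar i - Xstar * ν i / D := by
        have := heq i; field_simp at this ⊢; linarith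
      have hle : X * ν i ≤ Xstar * ν i := by
        rcases le_or_gt (ν i) 0 with h | h
        · nlinarith
        · nlinarith
      have := hSstar i
      rw [hS] at this
      have : Xstar * ν i / D ≤ Sbar i := by linarith
      have hdiv : X * ν i / D ≤ Xstar * ν i / D :=
        div_le_div_of_nonneg_right hle hD.le
      linarith
    · -- exporter: ν i ≤ 0
      have hnu := hexp i hi
      have : X * ν i / D ≤ 0 :=
        div_nonpos_of_nonpos_of_nonneg (mul_nonpos_of_nonneg_of_nonpos hX0 hnu) hD.le
      linarith [hSbar i]
  · intro i
    field_simp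
    ring
  · intro i hi
    have h1 := (himp i hi).1
    have h2 := (himp i hi).2
    have hVi := hV i hi
    have hKi := hK i hi
    have hnu : 0 ≤ Xstar * ν i := (heq i) ▸ h1
    have hSs : Sstar i = Sbar i - Xstar * ν i / D := by
      have := heq i; field_simp at this ⊢; linarith
    set S : ℝ := Sbar i - X * ν i / D with hSdef
    have hle : X * ν i ≤ Xstar * ν i := by
      rcases le_or_gt (ν i) 0 with h | h
      · nlinarith
      · nlinarith
    have hSge : Sstar i ≤ S := by
      rw [hSs, hSdef]
      have : X * ν i / D ≤ Xstar * ν i / D := div_le_div_of_nonneg_right hle hD.le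
      linarith
    have hS0 : 0 ≤ S := (hSstar i).trans hSge
    have hXnu : 0 ≤ X * ν i := by
      rcases eq_or_lt_of_le hXstar with h | h
      · have hX : X = 0 := le_antisymm (by linarith) hX0
        simp [hX]
      · have : 0 ≤ ν i := by nlinarith
        exact mul_nonneg hX0 this
    have hlhs : D * (Sbar i - S) = X * ν i := by rw [hSdef]; field_simp; ring
    refine ⟨by rw [hlhs]; exact hXnu, ?_⟩
    rw [hlhs]
    -- monotonicity of MM efficiency
    have hKS : 0 < K i + Sstar i := by linarith [hSstar i]
    have hKS' : 0 < K i + S := by linarith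
    have heff : V i * Sstar i / (K i + Sstar i) ≤ V i * S / (K i + S) := by
      rw [div_le_div_iff₀ hKS hKS']
      nlinarith [mul_nonneg (mul_nonneg hVi.le hKi.le) (sub_nonneg.mpr hSge)]
    have heffpos : 0 ≤ V i * S / (K i + S) :=
      div_nonneg (mul_nonneg hVi.le hS0) hKS'.le
    rcases eq_or_lt_of_le hXstar with h | h
    · -- Xstar = 0 ⟹ X = 0
      have hX : X = 0 := le_antisymm (hXle.trans h.symm.le) hX0
      simp [hX]
    · -- Xstar > 0: ν i ≤ eff* * T
      have hkey : ν i ≤ V i * Sstar i / (K i + Sstar i) * T i := by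
        have := h2
        rw [heq i] at this
        nlinarith
      calc X * ν i ≤ X * (V i * Sstar i / (K i + Sstar i) * T i) :=
            mul_le_mul_of_nonneg_left hkey hX0
        _ ≤ X * (V i * S / (K i + S)) * T i := by
            rw [mul_assoc]
            exact mul_le_mul_of_nonneg_left
              (mul_le_mul_of_nonneg_right heff (hT i)) hX0
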